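/- Let A be an m×m complex matrix and B an n×n complex matrix, each with all eigenvalues having negative real part, and let C be an arbitrary m×n complex matrix. Then the integral Ω = ∫₀^∞ exp(τA)·C·exp(τB) dτ converges, the matrix Ω satisfies the Sylvester equation AΩ + ΩB + C = 0, and Ω is the unique m×n matrix satisfying this equation. -/

import Mathlib

open Matrix MeasureTheory
open NormedSpace Filter Topology

attribute [local instance] Matrix.frobeniusNormedAddCommGroup Matrix.frobeniusNormedSpace
attribute [local instance] Matrix.frobeniusNormedRing Matrix.frobeniusNormedAlgebra

lemma aux_scalar {ε : ℝ} (hε : 0 < ε) (j : ℕ) :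
    Tendsto (fun τ : ℝ => τ ^ j * Real.exp (-(ε * τ))) atTop (𝓝 0) := by
  have h1 : Tendsto (fun τ : ℝ => (ε * τ) ^ j * Real.exp (-(ε * τ))) atTop (𝓝 0) :=
    (Real.tendsto_pow_mul_exp_neg_atTop_nhds_zero j).comp
      (Filter.Tendsto.const_mul_atTop hε tendsto_id)
  have h2 := h1.const_mul ((ε : ℝ) ^ j)⁻¹
  rw [mul_zero] at h2
  refine h2.congr fun τ => ?_
  field_simp [mul_pow]
  ring

lemma aux_gen {m : ℕ} (A : Matrix (Fin m) (Fin m) ℂ) {ε : ℝ} (hε : 0 < ε)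
    (hspec : ∀ z ∈ spectrum ℂ A, z.re ≤ -(2 * ε)) (μ : ℂ) (v : Fin m → ℂ) (k : ℕ)
    (hv : ((A - μ • 1) ^ k) *ᵥ v = 0) :
    Tendsto (fun τ : ℝ => Real.exp (ε * τ) • ((exp (τ • A)) *ᵥ v)) atTop (𝓝 0) := by
  rcases eq_or_ne v 0 with rfl | hv0
  · simpa [Matrix.mulVec_zero] using tendsto_const_nhds
  set N : Matrix (Fin m) (Fin m) ℂ := A - μ • 1 with hNdef
  -- μ is in the spectrum of A
  have hμ : μ ∈ spectrum ℂ A := by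
    have e1 : (Matrix.toLinAlgEquiv' A - μ • 1) = Matrix.toLinAlgEquiv' N := by
      rw [hNdef, map_sub, _root_.map_smul, _root_.map_one]
    have h1 : v ∈ Module.End.genEigenspace (Matrix.toLinAlgEquiv' A) μ k := by
      rw [Module.End.mem_genEigenspace_nat, LinearMap.mem_ker, e1, ← map_pow,
        Matrix.toLinAlgEquiv'_apply, hv]
    have h2 : Module.End.HasEigenvalue (Matrix.toLinAlgEquiv' A) μ :=
      Module.End.hasEigenvalue_of_hasGenEigenvalue (k := k)
        (by rw [Module.End.hasGenEigenvalue_iff]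
            exact fun hbot => hv0 (by simpa [hbot] using h1))
    rw [Module.End.hasEigenvalue_iff_mem_spectrum] at h2
    rwa [AlgEquiv.spectrum_eq Matrix.toLinAlgEquiv' A] at h2
  have hre : μ.re ≤ -(2 * ε) := hspec μ hμ
  -- vanishing of high powers
  have hNj : ∀ j, k ≤ j → (N ^ j) *ᵥ v = 0 := by
    intro j hj
    rw [← Nat.sub_add_cancel hj, pow_add, ← Matrix.mulVec_mulVec, hv, Matrix.mulVec_zero]
  -- the key formula
  have key : ∀ τ : ℝ, (exp (τ • A)) *ᵥ v
      = ∑ j ∈ Finset.range k,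
          (Complex.exp (τ * μ) * ((τ : ℂ) ^ j * (Nat.factorial j : ℂ)⁻¹)) • ((N ^ j) *ᵥ v) := by
    intro τ
    have hsplit : τ • A = ((τ : ℂ) * μ) • (1 : Matrix (Fin m) (Fin m) ℂ) + (τ : ℂ) • N := by
      show (τ : ℂ) • A = _
      rw [hNdef, smul_sub, smul_smul]
      abel
    have hcomm : Commute (((τ : ℂ) * μ) • (1 : Matrix (Fin m) (Fin m) ℂ)) ((τ : ℂ) • N) :=
      ((Commute.one_left N).smul_left _).smul_right _
    have hexp1 : exp (((τ : ℂ) * μ) • (1 : Matrix (Fin m) (Fin m) ℂ))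
        = Complex.exp ((τ : ℂ) * μ) • (1 : Matrix (Fin m) (Fin m) ℂ) := by
      have hc : Continuous (algebraMap ℂ (Matrix (Fin m) (Fin m) ℂ)) :=
        (algebraMapCLM ℂ (Matrix (Fin m) (Fin m) ℂ)).continuous
      have h := map_exp (algebraMap ℂ (Matrix (Fin m) (Fin m) ℂ)) hc ((τ : ℂ) * μ)
      rw [← Algebra.algebraMap_eq_smul_one, ← Algebra.algebraMap_eq_smul_one, Complex.exp_eq_exp_ℂ]
      exact h.symm
    -- mulVec as a continuous linear map
    let L : Matrix (Fin m) (Fin m) ℂ →L[ℂ] (Fin m → ℂ) :=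
      LinearMap.toContinuousLinearMap
        { toFun := fun M => M *ᵥ v
          map_add' := fun M N => Matrix.add_mulVec M N v
          map_smul' := fun c M => Matrix.smul_mulVec c M v }
    have hL : ∀ M : Matrix (Fin m) (Fin m) ℂ, L M = M *ᵥ v := fun _ => rfl
    have hexp2 : (exp ((τ : ℂ) • N)) *ᵥ v
        = ∑ j ∈ Finset.range k, ((τ : ℂ) ^ j * (Nat.factorial j : ℂ)⁻¹) • ((N ^ j) *ᵥ v) := by
      rw [← hL, exp_eq_tsum ℂ, L.map_tsum (expSeries_summable' (𝕂 := ℂ) ((τ : ℂ) • N))]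
      rw [tsum_eq_sum (s := Finset.range k) ?_]
      · refine Finset.sum_congr rfl fun j _ => ?_
        rw [hL, smul_pow, smul_mulVec, smul_mulVec, smul_smul, mul_comm ((Nat.factorial j : ℂ)⁻¹)]
      · intro j hj
        rw [hL, smul_pow, smul_mulVec, smul_mulVec,
          hNj j (by simpa using hj), smul_zero, smul_zero]
    rw [hsplit, (show exp (((τ : ℂ) * μ) • (1 : Matrix (Fin m) (Fin m) ℂ) + (τ : ℂ) • N)
        = exp (((τ : ℂ) * μ) • (1 : Matrix (Fin m) (Fin m) ℂ)) * exp ((τ : ℂ) • N) from NormedSpace.exp_add_of_commute hcomm), hexp1, smul_mul_assoc, one_mul,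
      Matrix.smul_mulVec, hexp2, Finset.smul_sum]
    refine Finset.sum_congr rfl fun j _ => ?_
    rw [smul_smul]
  -- conclusion by squeezing each summand
  simp only [key, Finset.smul_sum]
  rw [show (0 : Fin m → ℂ) = ∑ j ∈ Finset.range k, 0 by simp]
  refine tendsto_finset_sum _ fun j _ => ?_
  set w : Fin m → ℂ := (N ^ j) *ᵥ v with hw
  have htend : Tendsto (fun τ : ℝ =>
      (‖w‖ * (Nat.factorial j : ℝ)⁻¹) * (τ ^ j * Real.exp (-(ε * τ)))) atTop (𝓝 0) := by
    simpa using (aux_scalar hε j).const_mul (‖w‖ * (Nat.factorial j : ℝ)⁻¹)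
  refine squeeze_zero_norm' ?_ htend
  filter_upwards [eventually_ge_atTop (0 : ℝ)] with τ hτ
  have e1 : ‖Real.exp (ε * τ) • ((Complex.exp ((τ:ℂ) * μ) * ((τ:ℂ) ^ j * (Nat.factorial j : ℂ)⁻¹)) • w)‖
      = Real.exp (ε * τ) * (Real.exp (τ * μ.re) * (τ ^ j * (Nat.factorial j : ℝ)⁻¹)) * ‖w‖ := by
    rw [norm_smul, norm_smul, Real.norm_eq_abs, abs_of_pos (Real.exp_pos _),
      norm_mul, Complex.norm_exp, norm_mul, norm_pow, norm_inv,
      Complex.norm_natCast, Complex.norm_real, Real.norm_eq_abs, abs_of_nonneg hτ]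
    have : ((τ:ℂ) * μ).re = τ * μ.re := by simp [Complex.mul_re]
    rw [this]; ring
  rw [e1]
  have h3 : Real.exp (ε * τ) * Real.exp (τ * μ.re) ≤ Real.exp (-(ε * τ)) := by
    rw [← Real.exp_add]
    apply Real.exp_le_exp.mpr
    nlinarith
  calc Real.exp (ε * τ) * (Real.exp (τ * μ.re) * (τ ^ j * (Nat.factorial j : ℝ)⁻¹)) * ‖w‖
      = (Real.exp (ε * τ) * Real.exp (τ * μ.re)) * (τ ^ j * (Nat.factorial j : ℝ)⁻¹ * ‖w‖) := by
        ring
    _ ≤ Real.exp (-(ε * τ)) * (τ ^ j * (Nat.factorial j : ℝ)⁻¹ * ‖w‖) := by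
        apply mul_le_mul_of_nonneg_right h3
        positivity
    _ = (‖w‖ * (Nat.factorial j : ℝ)⁻¹) * (τ ^ j * Real.exp (-(ε * τ))) := by ring

lemma aux_vec {m : ℕ} (A : Matrix (Fin m) (Fin m) ℂ) {ε : ℝ} (hε : 0 < ε)
    (hspec : ∀ z ∈ spectrum ℂ A, z.re ≤ -(2 * ε)) (v : Fin m → ℂ) :
    Tendsto (fun τ : ℝ => Real.exp (ε * τ) • ((exp (τ • A)) *ᵥ v)) atTop (𝓝 0) := by
  set p : Submodule ℂ (Fin m → ℂ) :=
    { carrier := {v | Tendsto (fun τ : ℝ => Real.exp (ε * τ) • ((exp (τ • A)) *ᵥ v))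
        atTop (𝓝 0)}
      add_mem' := by
        intro a b ha hb
        have := ha.add hb
        rw [add_zero] at this
        refine this.congr fun τ => ?_
        rw [← smul_add, ← Matrix.mulVec_add]
      zero_mem' := by
        simpa [Matrix.mulVec_zero] using tendsto_const_nhds
      smul_mem' := by
        intro c v hv
        have := hv.const_smul c
        rw [smul_zero] at this
        refine this.congr fun τ => ?_
        rw [Matrix.mulVec_smul, smul_comm] } with hp
  suffices htop : p = ⊤ by
    have : v ∈ p := htop ▸ Submodule.mem_top
    exact this
  rw [← top_le_iff, ← Module.End.iSup_maxGenEigenspace_eq_top (Matrix.toLinAlgEquiv' A)]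
  refine iSup_le fun μ => fun x hx => ?_
  rw [Module.End.mem_maxGenEigenspace] at hx
  obtain ⟨k, hk⟩ := hx
  refine aux_gen A hε hspec μ x k ?_
  have e1 : (Matrix.toLinAlgEquiv' A - μ • 1) = Matrix.toLinAlgEquiv' (A - μ • 1) := by
    rw [map_sub, _root_.map_smul, _root_.map_one]
  rw [e1, ← map_pow, Matrix.toLinAlgEquiv'_apply] at hk
  exact hk

lemma aux_mat {m : ℕ} (A : Matrix (Fin m) (Fin m) ℂ) {ε : ℝ} (hε : 0 < ε)
    (hspec : ∀ z ∈ spectrum ℂ A, z.re ≤ -(2 * ε)) :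
    Tendsto (fun τ : ℝ => Real.exp (ε * τ) * ‖exp (τ • A)‖) atTop (𝓝 0) := by
  have hM : Tendsto (fun τ : ℝ => Real.exp (ε * τ) • exp (τ • A)) atTop
      (𝓝 (0 : Matrix (Fin m) (Fin m) ℂ)) := by
    have hdec : ∀ τ : ℝ, Real.exp (ε * τ) • exp (τ • A)
        = ∑ j : Fin m, Matrix.vecMulVec
            (Real.exp (ε * τ) • ((exp (τ • A)) *ᵥ Pi.single j 1)) (Pi.single j 1) := by
      intro τ
      ext i j'
      simp only [Matrix.sum_apply, Matrix.vecMulVec_apply, Pi.smul_apply, Matrix.smul_apply,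
        Matrix.mulVec_single, mul_one, Pi.single_apply, mul_ite, mul_zero, mul_one]
      rw [Finset.sum_ite_eq Finset.univ j' _]
      simp
    rw [show (0 : Matrix (Fin m) (Fin m) ℂ) = ∑ j : Fin m, 0 by simp]
    refine Tendsto.congr (fun τ => (hdec τ).symm) (tendsto_finset_sum _ fun j _ => ?_)
    -- continuous linear map u ↦ vecMulVec u (single j 1)
    let φ : (Fin m → ℂ) →ₗ[ℂ] Matrix (Fin m) (Fin m) ℂ :=
      { toFun := fun u => Matrix.vecMulVec u (Pi.single j 1)
        map_add' := by intro a b; ext i j'; simp [Matrix.vecMulVec_apply, add_mul]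
        map_smul' := by intro c a; ext i j'; simp [Matrix.vecMulVec_apply]; ring }
    have hφ := (LinearMap.toContinuousLinearMap φ).continuous
    have h0 : Matrix.vecMulVec (0 : Fin m → ℂ) (Pi.single j 1)
        = (0 : Matrix (Fin m) (Fin m) ℂ) := by
      ext i j'; simp [Matrix.vecMulVec_apply]
    have h2 := (hφ.tendsto 0).comp (aux_vec A hε hspec (Pi.single j 1))
    rw [show (LinearMap.toContinuousLinearMap φ) (0 : Fin m → ℂ) = 0 from map_zero _] at h2
    exact h2.congr fun τ => rfl
  have := hM.norm
  rw [norm_zero] at this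
  refine this.congr fun τ => ?_
  rw [norm_smul, Real.norm_eq_abs, abs_of_pos (Real.exp_pos _)]

lemma exp_decay {m : ℕ} (A : Matrix (Fin m) (Fin m) ℂ)
    (hA : ∀ z ∈ spectrum ℂ A, z.re < 0) :
    ∃ ε : ℝ, 0 < ε ∧ ∃ c : ℝ, 0 ≤ c ∧
      ∀ τ : ℝ, 0 ≤ τ → ‖exp (τ • A)‖ ≤ c * Real.exp (-(ε * τ)) := by
  rcases Nat.eq_zero_or_pos m with rfl | hm
  · refine ⟨1, one_pos, 0, le_refl 0, fun τ _ => ?_⟩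
    have : exp (τ • A) = 0 := Subsingleton.elim _ _
    simp [this]
  · have : NeZero m := ⟨hm.ne'⟩
    obtain ⟨z₀, hz₀, hmax⟩ := (spectrum.isCompact (𝕜 := ℂ) A).exists_isMaxOn
      (spectrum.nonempty A) Complex.continuous_re.continuousOn
    set ε : ℝ := -z₀.re / 2 with hεdef
    have hε : 0 < ε := by have := hA z₀ hz₀; simp only [hεdef]; linarith
    have hspec : ∀ z ∈ spectrum ℂ A, z.re ≤ -(2 * ε) := by
      intro z hz
      have : z.re ≤ z₀.re := hmax hz
      simp only [hεdef]; linarith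
    have htend := aux_mat A hε hspec
    set g : ℝ → ℝ := fun τ => Real.exp (ε * τ) * ‖exp (τ • A)‖ with hg
    have hgc : Continuous g := by
      apply Continuous.mul
      · exact Real.continuous_exp.comp (continuous_const.mul continuous_id)
      · exact (exp_continuous.comp (continuous_id.smul continuous_const)).norm
    obtain ⟨T, hT⟩ : ∃ T : ℝ, ∀ τ ≥ T, g τ ≤ 1 := by
      have h1 := htend.eventually_le_const (by norm_num : (0:ℝ) < 1)
      rcases (eventually_atTop).mp h1 with ⟨T, hT⟩
      exact ⟨T, hT⟩
    obtain ⟨τ₀, _, hbd⟩ := (isCompact_Icc (a := (0:ℝ)) (b := max T 0)).exists_isMaxOn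
      ⟨0, by simp [le_max_right]⟩ hgc.continuousOn
    refine ⟨ε, hε, max (g τ₀) 1, le_trans zero_le_one (le_max_right _ _), fun τ hτ => ?_⟩
    have hgτ : g τ ≤ max (g τ₀) 1 := by
      rcases le_total τ (max T 0) with h | h
      · exact le_max_of_le_left (hbd ⟨hτ, h⟩)
      · exact le_max_of_le_right (hT τ (le_trans (le_max_left _ _) h))
    have : ‖exp (τ • A)‖ = g τ * Real.exp (-(ε * τ)) := by
      show _ = Real.exp (ε * τ) * ‖exp (τ • A)‖ * Real.exp (-(ε * τ))
      rw [mul_comm (Real.exp (ε * τ)) _, mul_assoc, ← Real.exp_add]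
      simp
    rw [this]
    exact mul_le_mul_of_nonneg_right hgτ (Real.exp_nonneg _)

section deriv
variable {m n : ℕ}

@[reducible]
noncomputable def frobTop (a b : ℕ) : TopologicalSpace (Matrix (Fin a) (Fin b) ℂ) :=
  @UniformSpace.toTopologicalSpace _ (@PseudoMetricSpace.toUniformSpace _
    (@SeminormedAddCommGroup.toPseudoMetricSpace _
      (@NormedAddCommGroup.toSeminormedAddCommGroup _ Matrix.frobeniusNormedAddCommGroup)))

attribute [local instance] frobTop

/-- the bilinear product map as a continuous linear map -/
noncomputable def Phi (X : Matrix (Fin m) (Fin n) ℂ) :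
    Matrix (Fin m) (Fin m) ℂ →L[ℝ]
      Matrix (Fin n) (Fin n) ℂ →L[ℝ] Matrix (Fin m) (Fin n) ℂ :=
  LinearMap.toContinuousLinearMap
    { toFun := fun P => LinearMap.toContinuousLinearMap
        { toFun := fun Q => P * X * Q
          map_add' := fun Q Q' => Matrix.mul_add _ Q Q'
          map_smul' := fun c Q => Matrix.mul_smul _ c Q }
      map_add' := by
        intro P P'; ext Q; simp [Matrix.add_mul]
      map_smul' := by
        intro c P; ext Q; simp [Matrix.smul_mul] }

lemma Phi_apply (X : Matrix (Fin m) (Fin n) ℂ) (P : Matrix (Fin m) (Fin m) ℂ)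
    (Q : Matrix (Fin n) (Fin n) ℂ) : Phi X P Q = P * X * Q := rfl

lemma hasDerivAt_F (A : Matrix (Fin m) (Fin m) ℂ) (B : Matrix (Fin n) (Fin n) ℂ)
    (X : Matrix (Fin m) (Fin n) ℂ) (τ : ℝ) :
    HasDerivAt (fun τ : ℝ => exp (τ • A) * X * exp (τ • B))
      (A * (exp (τ • A) * X * exp (τ • B))
        + (exp (τ • A) * X * exp (τ • B)) * B) τ := by
  have hA : HasDerivAt (fun τ : ℝ => exp (τ • A)) (A * exp (τ • A)) τ := by
    exact hasDerivAt_exp_smul_const' A τ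
  have hB : HasDerivAt (fun τ : ℝ => exp (τ • B)) (exp (τ • B) * B) τ := by
    exact hasDerivAt_exp_smul_const B τ
  have h1 : HasDerivAt (fun τ : ℝ => Phi X (exp (τ • A)))
      (Phi X (A * exp (τ • A))) τ :=
    (Phi X).hasFDerivAt.comp_hasDerivAt τ hA
  have h2 := h1.clm_apply hB
  change HasDerivAt (fun τ : ℝ => exp (τ • A) * X * exp (τ • B))
    (A * exp (τ • A) * X * exp (τ • B) + exp (τ • A) * X * (exp (τ • B) * B)) τ at h2
  convert h2 using 1
  simp only [Matrix.mul_assoc]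

end deriv

set_option maxHeartbeats 1000000 in
theorem stmt_1 {m n : ℕ}
    (A : Matrix (Fin m) (Fin m) ℂ) (B : Matrix (Fin n) (Fin n) ℂ)
    (C : Matrix (Fin m) (Fin n) ℂ)
    (hA : ∀ z ∈ spectrum ℂ A, z.re < 0)
    (hB : ∀ z ∈ spectrum ℂ B, z.re < 0)
    (Ω : Matrix (Fin m) (Fin n) ℂ)
    (hΩ : Ω = ∫ τ in Set.Ioi (0 : ℝ),
        NormedSpace.exp (τ • A) * C * NormedSpace.exp (τ • B)) :
    @IntegrableOn _ _ _ _ SeminormedAddGroup.toContinuousENorm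
        (fun τ : ℝ => NormedSpace.exp (τ • A) * C * NormedSpace.exp (τ • B))
        (Set.Ioi 0) volume ∧
      A * Ω + Ω * B + C = 0 ∧
      ∀ X : Matrix (Fin m) (Fin n) ℂ, A * X + X * B + C = 0 → X = Ω := by
  obtain ⟨ε₁, hε₁, c₁, hc₁0, hc₁⟩ := exp_decay A hA
  obtain ⟨ε₂, hε₂, c₂, hc₂0, hc₂⟩ := exp_decay B hB
  have hbound : ∀ X : Matrix (Fin m) (Fin n) ℂ, ∀ τ : ℝ, 0 ≤ τ →
      ‖exp (τ • A) * X * exp (τ • B)‖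
        ≤ (c₁ * c₂ * ‖X‖) * Real.exp (-((ε₁ + ε₂) * τ)) := by
    intro X τ hτ
    calc ‖exp (τ • A) * X * exp (τ • B)‖
        ≤ ‖exp (τ • A)‖ * ‖X‖ * ‖exp (τ • B)‖ :=
          le_trans (Matrix.frobenius_norm_mul _ _)
            (mul_le_mul_of_nonneg_right (Matrix.frobenius_norm_mul _ _) (norm_nonneg _))
      _ ≤ (c₁ * Real.exp (-(ε₁ * τ))) * ‖X‖ * (c₂ * Real.exp (-(ε₂ * τ))) :=
          mul_le_mul
            (mul_le_mul_of_nonneg_right (hc₁ τ hτ) (norm_nonneg _))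
            (hc₂ τ hτ) (norm_nonneg _)
            (mul_nonneg (mul_nonneg hc₁0 (Real.exp_nonneg _)) (norm_nonneg _))
      _ = (c₁ * c₂ * ‖X‖) * Real.exp (-((ε₁ + ε₂) * τ)) := by
          rw [show -((ε₁ + ε₂) * τ) = -(ε₁ * τ) + -(ε₂ * τ) by ring, Real.exp_add]; ring
  have cA : Continuous (fun τ : ℝ => exp (τ • A)) :=
    exp_continuous.comp (continuous_id.smul continuous_const)
  have cB : Continuous (fun τ : ℝ => exp (τ • B)) :=
    exp_continuous.comp (continuous_id.smul continuous_const)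
  have hcont : ∀ X : Matrix (Fin m) (Fin n) ℂ,
      Continuous (fun τ : ℝ => exp (τ • A) * X * exp (τ • B)) := by
    intro X
    exact isBoundedBilinearMap_apply.continuous.comp
      (((Phi X).continuous.comp cA).prodMk cB)
  have hint : ∀ X : Matrix (Fin m) (Fin n) ℂ,
      @IntegrableOn _ _ _ _ SeminormedAddGroup.toContinuousENorm
        (fun τ : ℝ => exp (τ • A) * X * exp (τ • B)) (Set.Ioi 0) volume := by
    intro X
    refine Integrable.mono'
        (g := fun τ => (c₁ * c₂ * ‖X‖) * Real.exp (-((ε₁ + ε₂) * τ))) ?_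
        (by
          haveI : TopologicalSpace.PseudoMetrizableSpace (Matrix (Fin m) (Fin n) ℂ) :=
            inferInstanceAs (TopologicalSpace.PseudoMetrizableSpace (Fin m → Fin n → ℂ))
          exact (hcont X).aestronglyMeasurable) ?_
    · have h := (exp_neg_integrableOn_Ioi 0 (by positivity : (0:ℝ) < ε₁ + ε₂)).const_mul
        (c₁ * c₂ * ‖X‖)
      simpa only [neg_mul] using h
    · filter_upwards [ae_restrict_mem measurableSet_Ioi] with τ hτ
      exact hbound X τ (le_of_lt hτ)
  have htend : ∀ X : Matrix (Fin m) (Fin n) ℂ,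
      Tendsto (fun τ : ℝ => exp (τ • A) * X * exp (τ • B)) atTop (𝓝 0) := by
    intro X
    refine squeeze_zero_norm'
        (a := fun τ => (c₁ * c₂ * ‖X‖) * Real.exp (-((ε₁ + ε₂) * τ))) ?_ ?_
    · filter_upwards [eventually_ge_atTop (0 : ℝ)] with τ hτ
      exact hbound X τ hτ
    · have hδt : Tendsto (fun τ : ℝ => -((ε₁ + ε₂) * τ)) atTop atBot :=
        tendsto_neg_atTop_atBot.comp
          (Tendsto.const_mul_atTop (by positivity) tendsto_id)
      have := (Real.tendsto_exp_atBot.comp hδt).const_mul (c₁ * c₂ * ‖X‖)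
      simpa [Function.comp_def] using this
  -- the two continuous linear maps
  let LA : Matrix (Fin m) (Fin n) ℂ →L[ℝ] Matrix (Fin m) (Fin n) ℂ :=
    LinearMap.toContinuousLinearMap
      { toFun := fun X => A * X
        map_add' := fun X Y => Matrix.mul_add A X Y
        map_smul' := fun c X => Matrix.mul_smul A c X }
  let RB : Matrix (Fin m) (Fin n) ℂ →L[ℝ] Matrix (Fin m) (Fin n) ℂ :=
    LinearMap.toContinuousLinearMap
      { toFun := fun X => X * B
        map_add' := fun X Y => Matrix.add_mul X Y B
        map_smul' := fun c X => Matrix.smul_mul c X B }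
  have hLA : ∀ x : Matrix (Fin m) (Fin n) ℂ, LA x = A * x := fun _ => rfl
  have hRB : ∀ x : Matrix (Fin m) (Fin n) ℂ, RB x = x * B := fun _ => rfl
  have hIA : @IntegrableOn _ _ _ _ SeminormedAddGroup.toContinuousENorm
      (fun τ : ℝ => A * (exp (τ • A) * C * exp (τ • B))) (Set.Ioi 0) volume := by
    have h := LA.integrable_comp (hint C)
    exact h
  have hIB : @IntegrableOn _ _ _ _ SeminormedAddGroup.toContinuousENorm
      (fun τ : ℝ => (exp (τ • A) * C * exp (τ • B)) * B) (Set.Ioi 0) volume := by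
    have h := RB.integrable_comp (hint C)
    exact h
  have hf0 : ∀ X : Matrix (Fin m) (Fin n) ℂ,
      exp ((0:ℝ) • A) * X * exp ((0:ℝ) • B) = X := by
    intro X
    rw [zero_smul, zero_smul, exp_zero, exp_zero, Matrix.one_mul, Matrix.mul_one]
  refine ⟨hint C, ?_, ?_⟩
  · -- the Sylvester equation
    have key := integral_Ioi_of_hasDerivAt_of_tendsto (a := 0)
      (f := fun τ : ℝ => exp (τ • A) * C * exp (τ • B))
      (f' := fun τ : ℝ => A * (exp (τ • A) * C * exp (τ • B))
        + (exp (τ • A) * C * exp (τ • B)) * B)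
      ((hcont C).continuousWithinAt)
      (fun τ _ => hasDerivAt_F A B C τ)
      (hIA.add hIB) (htend C)
    rw [MeasureTheory.integral_add hIA hIB] at key
    have h1 : (∫ τ in Set.Ioi (0:ℝ), A * (exp (τ • A) * C * exp (τ • B))) = A * Ω := by
      have h := LA.integral_comp_comm (hint C)
      rw [hΩ]; exact h
    have h2 : (∫ τ in Set.Ioi (0:ℝ), (exp (τ • A) * C * exp (τ • B)) * B) = Ω * B := by
      have h := RB.integral_comp_comm (hint C)
      rw [hΩ]; exact h
    rw [h1, h2] at key
    simp only [hf0, zero_sub] at key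
    rw [key]
    abel
  · -- uniqueness
    intro X hX
    have hAXB : A * X + X * B = -C := eq_neg_of_add_eq_zero_left hX
    have hHd : ∀ τ ∈ Set.Ioi (0:ℝ),
        HasDerivAt (fun τ : ℝ => exp (τ • A) * X * exp (τ • B))
          (-(exp (τ • A) * C * exp (τ • B))) τ := by
      intro τ _
      have h : HasDerivAt (fun τ : ℝ => exp (τ • A) * X * exp (τ • B))
          (A * (exp (τ • A) * X * exp (τ • B)) + (exp (τ • A) * X * exp (τ • B)) * B) τ :=
        hasDerivAt_F A B X τ
      have ceA : A * exp (τ • A) = exp (τ • A) * A :=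
        ((((Commute.refl A).smul_left τ).exp_left).symm).eq
      have ceB : exp (τ • B) * B = B * exp (τ • B) :=
        (((Commute.refl B).smul_left τ).exp_left).eq
      have e : A * (exp (τ • A) * X * exp (τ • B))
          + (exp (τ • A) * X * exp (τ • B)) * B
          = exp (τ • A) * (A * X + X * B) * exp (τ • B) := by
        rw [Matrix.mul_add, Matrix.add_mul]
        congr 1
        · rw [← Matrix.mul_assoc, ← Matrix.mul_assoc, ← Matrix.mul_assoc, ← ceA]
        · rw [Matrix.mul_assoc (exp (τ • A) * X) (exp (τ • B)) B, ceB,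
            ← Matrix.mul_assoc, Matrix.mul_assoc (exp (τ • A)) X B]
      rw [e, hAXB, Matrix.mul_neg, Matrix.neg_mul] at h
      exact h
    have key2 := integral_Ioi_of_hasDerivAt_of_tendsto (a := 0)
      (f := fun τ : ℝ => exp (τ • A) * X * exp (τ • B))
      (f' := fun τ : ℝ => -(exp (τ • A) * C * exp (τ • B)))
      ((hcont X).continuousWithinAt) hHd ((hint C).neg) (htend X)
    rw [MeasureTheory.integral_neg] at key2
    simp only [hf0, zero_sub, neg_inj] at key2
    rw [hΩ, ← key2]
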